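/- Let X ⊂ W^{2n,1}(J) be a subset of W^{2n,1}(J) determined by linear boundary conditions such that whenever v ∈ X, the reflected function w(t) := v(2T − t) also belongs to X. Assume L̃ is nonresonant in X and let G[2T] denote the Green's function of (L̃, X). Then G[2T](t,s) = G[2T](2T − t, 2T − s) for all (t,s) ∈ J × J. -/

import Mathlib

open MeasureTheory Set

/-- `u` belongs to the space `W^{m,1}([0,T])`: it is of class `C^{m-1}` on `[0,T]` and
its `(m-1)`-st derivative is absolutely continuous, expressed via the fundamental
theorem of calculus with an integrable `m`-th derivative. -/
def MemW (m : ℕ) (T : ℝ) (u : ℝ → ℝ) : Prop :=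
  (∀ k < m, ContinuousOn (iteratedDeriv k u) (Icc 0 T)) ∧
  IntervalIntegrable (iteratedDeriv m u) volume 0 T ∧
  ∀ t ∈ Icc 0 T,
    iteratedDeriv (m - 1) u t
      = iteratedDeriv (m - 1) u 0 + ∫ s in (0:ℝ)..t, iteratedDeriv m u s

/-- The `2n`-th order linear differential operator
`L u = u^{(2n)} + a_{2n-1} u^{(2n-1)} + ⋯ + a_1 u' + a_0 u`. -/
noncomputable def Lop (n : ℕ) (a : ℕ → ℝ → ℝ) (u : ℝ → ℝ) (t : ℝ) : ℝ :=
  iteratedDeriv (2 * n) u t + ∑ k ∈ Finset.range (2 * n), a k t * iteratedDeriv k u t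

/-- Neumann space on `[0,T]`. -/
def XN (n : ℕ) (T : ℝ) : Set (ℝ → ℝ) :=
  {u | MemW (2 * n) T u ∧ ∀ k < n,
    iteratedDeriv (2 * k + 1) u 0 = 0 ∧ iteratedDeriv (2 * k + 1) u T = 0}

/-- Dirichlet space on `[0,T]`. -/
def XD (n : ℕ) (T : ℝ) : Set (ℝ → ℝ) :=
  {u | MemW (2 * n) T u ∧ ∀ k < n,
    iteratedDeriv (2 * k) u 0 = 0 ∧ iteratedDeriv (2 * k) u T = 0}

/-- Mixed space 1 on `[0,T]`. -/
def XM1 (n : ℕ) (T : ℝ) : Set (ℝ → ℝ) :=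
  {u | MemW (2 * n) T u ∧ ∀ k < n,
    iteratedDeriv (2 * k + 1) u 0 = 0 ∧ iteratedDeriv (2 * k) u T = 0}

/-- Mixed space 2 on `[0,T]`. -/
def XM2 (n : ℕ) (T : ℝ) : Set (ℝ → ℝ) :=
  {u | MemW (2 * n) T u ∧ ∀ k < n,
    iteratedDeriv (2 * k) u 0 = 0 ∧ iteratedDeriv (2 * k + 1) u T = 0}

/-- Periodic space on `[0,T]`. -/
def XP (n : ℕ) (T : ℝ) : Set (ℝ → ℝ) :=
  {u | MemW (2 * n) T u ∧ ∀ k < 2 * n, iteratedDeriv k u 0 = iteratedDeriv k u T}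

/-- Antiperiodic space on `[0,T]`. -/
def XA (n : ℕ) (T : ℝ) : Set (ℝ → ℝ) :=
  {u | MemW (2 * n) T u ∧ ∀ k < 2 * n, iteratedDeriv k u 0 = -iteratedDeriv k u T}

/-- The operator `Lop n a` is nonresonant in `X`: the only solution in `X` of the
homogeneous equation (a.e. on `[0,T]`) is the trivial one. -/
def Nonresonant (n : ℕ) (a : ℕ → ℝ → ℝ) (T : ℝ) (X : Set (ℝ → ℝ)) : Prop :=
  ∀ u ∈ X, (∀ᵐ t ∂volume, t ∈ Icc 0 T → Lop n a u t = 0) →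
    ∀ t ∈ Icc 0 T, u t = 0

/-- `G` is the Green's function of `(Lop n a, X)` on `[0,T]`: it is continuous on the
square and, for every `σ ∈ L¹(0,T)`, `t ↦ ∫₀ᵀ G t s σ s ds` is the unique solution in
`X` of `L u = σ` a.e. on `[0,T]`. -/
def IsGreen (n : ℕ) (a : ℕ → ℝ → ℝ) (T : ℝ) (X : Set (ℝ → ℝ)) (G : ℝ → ℝ → ℝ) : Prop :=
  ContinuousOn (fun p : ℝ × ℝ => G p.1 p.2) (Icc 0 T ×ˢ Icc 0 T) ∧
  ∀ σ : ℝ → ℝ, IntervalIntegrable σ volume 0 T →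
    ((fun t => ∫ s in (0:ℝ)..T, G t s * σ s) ∈ X ∧
     (∀ᵐ t ∂volume, t ∈ Icc 0 T →
        Lop n a (fun t' => ∫ s in (0:ℝ)..T, G t' s * σ s) t = σ t) ∧
     ∀ v ∈ X, (∀ᵐ t ∂volume, t ∈ Icc 0 T → Lop n a v t = σ t) →
       ∀ t ∈ Icc 0 T, v t = ∫ s in (0:ℝ)..T, G t s * σ s)

/-- Coefficients of the extended operator `L̃` on `[0,2T]`: the even-order coefficients
are extended evenly about `t = T`, the odd-order ones oddly. -/
noncomputable def tildeCoef (T : ℝ) (a : ℕ → ℝ → ℝ) : ℕ → ℝ → ℝ :=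
  fun k t => if t ≤ T then a k t else (-1 : ℝ) ^ k * a k (2 * T - t)

/-- Coefficients of the reflected operator `Ľ`:
`Ľ u = u^{(2n)} + Σ (-1)^k a_k(T - t) u^{(k)}`. -/
noncomputable def checkCoef (T : ℝ) (a : ℕ → ℝ → ℝ) : ℕ → ℝ → ℝ :=
  fun k t => (-1 : ℝ) ^ k * a k (T - t)

/-- `u` is an eigenfunction of `Lop n a` in `X` associated to the eigenvalue `lam`:
`u ∈ X`, `u` is not identically zero on `[0,T]`, and `L u + lam u = 0` a.e. on `[0,T]`. -/
def IsEigenfun (n : ℕ) (a : ℕ → ℝ → ℝ) (T : ℝ) (X : Set (ℝ → ℝ)) (lam : ℝ)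
    (u : ℝ → ℝ) : Prop :=
  u ∈ X ∧ (∃ t ∈ Icc 0 T, u t ≠ 0) ∧
  ∀ᵐ t ∂volume, t ∈ Icc 0 T → Lop n a u t + lam * u t = 0

/-- The set of eigenvalues (the spectrum) of `Lop n a` in `X`. -/
def SpecSet (n : ℕ) (a : ℕ → ℝ → ℝ) (T : ℝ) (X : Set (ℝ → ℝ)) : Set ℝ :=
  {lam | ∃ u, IsEigenfun n a T X lam u}

/-- `lam0` is the smallest eigenvalue of `Lop n a` in `X`, it is simple (its
eigenfunctions form a one-dimensional space), and it admits an eigenfunction which is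
strictly positive on the interior of the interval. -/
def IsPrincipal (n : ℕ) (a : ℕ → ℝ → ℝ) (T : ℝ) (X : Set (ℝ → ℝ)) (lam0 : ℝ) : Prop :=
  lam0 ∈ SpecSet n a T X ∧
  (∀ mu ∈ SpecSet n a T X, lam0 ≤ mu) ∧
  (∀ u v, IsEigenfun n a T X lam0 u → IsEigenfun n a T X lam0 v →
      ∃ c : ℝ, ∀ t ∈ Icc 0 T, v t = c * u t) ∧
  ∃ u, IsEigenfun n a T X lam0 u ∧ ∀ t ∈ Ioo 0 T, 0 < u t



private lemma iteratedDeriv_comp_const_sub' (k : ℕ) (f : ℝ → ℝ) (c x : ℝ) :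
    iteratedDeriv k (fun t => f (c - t)) x = (-1 : ℝ) ^ k * iteratedDeriv k f (c - x) := by
  have h2 := iteratedDeriv_comp_neg k (fun y => f (c + y)) x
  rw [iteratedDeriv_comp_const_add] at h2
  simpa [sub_eq_add_neg, smul_eq_mul] using h2

private lemma tildeCoef_reflect (T : ℝ) (a : ℕ → ℝ → ℝ) (k : ℕ) (t : ℝ) (h : t ≠ T) :
    tildeCoef T a k (2 * T - t) = (-1 : ℝ) ^ k * tildeCoef T a k t := by
  unfold tildeCoef
  rcases lt_or_gt_of_ne h with h' | h'
  · rw [if_neg (by linarith), if_pos h'.le, show 2 * T - (2 * T - t) = t by ring]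
  · rw [if_pos (by linarith), if_neg (by linarith), ← mul_assoc, ← pow_add,
      show k + k = 2 * k from (two_mul k).symm, pow_mul]
    norm_num

private lemma Lop_reflect (n : ℕ) (T : ℝ) (a : ℕ → ℝ → ℝ) (u : ℝ → ℝ) (t : ℝ) (h : t ≠ T) :
    Lop n (tildeCoef T a) (fun x => u (2 * T - x)) t
      = Lop n (tildeCoef T a) u (2 * T - t) := by
  unfold Lop
  have h2n : iteratedDeriv (2 * n) (fun x => u (2 * T - x)) t
      = iteratedDeriv (2 * n) u (2 * T - t) := by
    rw [iteratedDeriv_comp_const_sub', pow_mul]; norm_num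
  have hsum : (∑ k ∈ Finset.range (2 * n),
        tildeCoef T a k t * iteratedDeriv k (fun x => u (2 * T - x)) t)
      = ∑ k ∈ Finset.range (2 * n),
        tildeCoef T a k (2 * T - t) * iteratedDeriv k u (2 * T - t) := by
    refine Finset.sum_congr rfl fun k _ => ?_
    rw [iteratedDeriv_comp_const_sub' k, tildeCoef_reflect T a k t h]
    ring
  rw [h2n, hsum]


theorem green_symmetry (n : ℕ) (hn : 1 ≤ n) (T : ℝ) (hT : 0 < T)
    (a : ℕ → ℝ → ℝ) (ha : ∀ k < 2 * n, IntervalIntegrable (a k) volume 0 T)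
    (X : Set (ℝ → ℝ))
    (hXW : ∀ u ∈ X, MemW (2 * n) (2 * T) u)
    (hXadd : ∀ u ∈ X, ∀ v ∈ X, u + v ∈ X)
    (hXsmul : ∀ c : ℝ, ∀ u ∈ X, c • u ∈ X)
    (hXrefl : ∀ v ∈ X, (fun t => v (2 * T - t)) ∈ X)
    (hres : Nonresonant n (tildeCoef T a) (2 * T) X)
    (G : ℝ → ℝ → ℝ)
    (hG : IsGreen n (tildeCoef T a) (2 * T) X G) :
    ∀ t ∈ Icc 0 (2 * T), ∀ s ∈ Icc 0 (2 * T),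
      G t s = G (2 * T - t) (2 * T - s) := by
  -- notation
  set L := 2 * T with hL
  have hL0 : (0 : ℝ) ≤ L := by positivity
  obtain ⟨hGc, hGsol⟩ := hG
  -- continuity of slices of G
  have hslice : ∀ x ∈ Icc 0 L, ContinuousOn (fun s => G x s) (Icc 0 L) := by
    intro x hx
    have : ContinuousOn (fun s : ℝ => ((x, s) : ℝ × ℝ)) (Icc 0 L) :=
      (continuous_const.prodMk continuous_id).continuousOn
    exact hGc.comp this (fun s hs => ⟨hx, hs⟩)
  have hrslice : ∀ x ∈ Icc 0 L, ContinuousOn (fun s => G (L - x) (L - s)) (Icc 0 L) := by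
    intro x hx
    have hx' : L - x ∈ Icc 0 L := ⟨by simp at hx ⊢; linarith [hx.1, hx.2], by simp at hx ⊢; linarith [hx.1, hx.2]⟩
    have hc : ContinuousOn (fun s : ℝ => ((L - x, L - s) : ℝ × ℝ)) (Icc 0 L) :=
      (continuous_const.prodMk (continuous_const.sub continuous_id)).continuousOn
    refine hGc.comp hc (fun s hs => ⟨hx', ?_⟩)
    simp only [mem_Icc] at hs ⊢
    constructor <;> linarith [hs.1, hs.2]
  -- main step: for every integrable σ, ∫ (G t s - G (L-t) (L-s)) σ s = 0
  have main : ∀ t ∈ Icc 0 L, ∀ σ : ℝ → ℝ, IntervalIntegrable σ volume 0 L →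
      (∫ s in (0:ℝ)..L, (G t s - G (L - t) (L - s)) * σ s) = 0 := by
    intro t ht σ hσ
    set σc : ℝ → ℝ := fun s => σ (L - s) with hσc
    have hσcI : IntervalIntegrable σc volume 0 L := by
      have := (hσ.comp_sub_left L)
      simpa using this.symm
    obtain ⟨hmem, heq, _⟩ := hGsol σc hσcI
    obtain ⟨_, _, huniq⟩ := hGsol σ hσ
    set u : ℝ → ℝ := fun t' => ∫ s in (0:ℝ)..L, G t' s * σc s with hu
    have hv : (fun x => u (L - x)) ∈ X := hXrefl u hmem
    -- a.e. zero of the singleton {T}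
    have hTne : ∀ᵐ x : ℝ ∂volume, x ≠ T := by
      have : volume ({T} : Set ℝ) = 0 := measure_singleton T
      rw [ae_iff]
      simpa [Set.setOf_eq_eq_singleton] using this
    -- transfer the equation by reflection
    have hmp : MeasureTheory.MeasurePreserving (fun x : ℝ => L - x) volume volume := by
      have h1 : MeasureTheory.MeasurePreserving (fun x : ℝ => -x) volume volume :=
        Measure.measurePreserving_neg volume
      have h2 : MeasureTheory.MeasurePreserving (fun x : ℝ => L + x) volume volume :=
        measurePreserving_add_left volume L
      have := h2.comp h1
      simpa [Function.comp_def, sub_eq_add_neg] using this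
    have heq' : ∀ᵐ t' ∂volume, (L - t') ∈ Icc 0 L →
        Lop n (tildeCoef T a) u (L - t') = σc (L - t') :=
      hmp.quasiMeasurePreserving.ae heq
    have hLv : ∀ᵐ t' ∂volume, t' ∈ Icc 0 L →
        Lop n (tildeCoef T a) (fun x => u (L - x)) t' = σ t' := by
      filter_upwards [heq', hTne] with t' h1 h2
      intro htin
      rw [hL] at *
      rw [Lop_reflect n T a u t' h2]
      have hin : 2 * T - t' ∈ Icc 0 (2 * T) := by
        simp only [mem_Icc] at htin ⊢
        constructor <;> linarith [htin.1, htin.2]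
      rw [h1 hin]
      show σ (2 * T - (2 * T - t')) = σ t'
      rw [show 2 * T - (2 * T - t') = t' by ring]
    have hveq := huniq (fun x => u (L - x)) hv hLv t ht
    -- hveq : u (L - t) = ∫ s in 0..L, G t s * σ s
    have key : (∫ s in (0:ℝ)..L, G (L - t) s * σc s)
        = ∫ s in (0:ℝ)..L, G (L - t) (L - s) * σ s := by
      have h := intervalIntegral.integral_comp_sub_left
        (a := (0:ℝ)) (b := L) (fun s => G (L - t) (L - s) * σ s) L
      simp only [sub_zero, sub_self] at h
      rw [← h]
      apply intervalIntegral.integral_congr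
      intro x _
      show G (L - t) x * σ (L - x) = G (L - t) (L - (L - x)) * σ (L - x)
      rw [show L - (L - x) = x by ring]
    have huIcc : uIcc (0:ℝ) L = Icc 0 L := uIcc_of_le hL0
    have int1 : IntervalIntegrable (fun s => G t s * σ s) volume 0 L := by
      apply hσ.continuousOn_mul
      rw [huIcc]; exact hslice t ht
    have int2 : IntervalIntegrable (fun s => G (L - t) (L - s) * σ s) volume 0 L := by
      apply hσ.continuousOn_mul
      rw [huIcc]; exact hrslice t ht
    have : (∫ s in (0:ℝ)..L, G t s * σ s) = ∫ s in (0:ℝ)..L, G (L - t) (L - s) * σ s := by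
      rw [← key, ← hveq]
    calc (∫ s in (0:ℝ)..L, (G t s - G (L - t) (L - s)) * σ s)
        = (∫ s in (0:ℝ)..L, (G t s * σ s - G (L - t) (L - s) * σ s)) := by
          apply intervalIntegral.integral_congr; intro x _; ring
      _ = (∫ s in (0:ℝ)..L, G t s * σ s) - ∫ s in (0:ℝ)..L, G (L - t) (L - s) * σ s :=
          intervalIntegral.integral_sub int1 int2
      _ = 0 := by rw [this]; ring
  -- conclude pointwise via the choice σ = f
  intro t ht s hs
  set f : ℝ → ℝ := fun s => G t s - G (L - t) (L - s) with hf
  have hfc : ContinuousOn f (Icc 0 L) := (hslice t ht).sub (hrslice t ht)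
  have hfI : IntervalIntegrable f volume 0 L := by
    apply ContinuousOn.intervalIntegrable
    rwa [uIcc_of_le hL0]
  have hzero := main t ht f hfI
  have hints : IntervalIntegrable (fun s => f s * f s) volume 0 L := by
    apply hfI.continuousOn_mul
    rwa [uIcc_of_le hL0]
  have hae : (fun s => f s * f s) =ᵐ[volume.restrict (Ioc 0 L)] 0 := by
    rw [← intervalIntegral.integral_eq_zero_iff_of_le_of_nonneg_ae hL0
      (Filter.Eventually.of_forall (fun x => mul_self_nonneg (f x))) hints]
    exact hzero
  have hae' : (fun s => f s * f s) =ᵐ[volume.restrict (Icc 0 L)] 0 := by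
    rwa [Measure.restrict_congr_set Ioc_ae_eq_Icc] at hae
  have hne : (0 : ℝ) ≠ L := by positivity
  have heqon : EqOn (fun s => f s * f s) 0 (Icc 0 L) :=
    Measure.eqOn_Icc_of_ae_eq volume hne hae' (hfc.mul hfc) continuousOn_const
  have : f s * f s = 0 := heqon hs
  have : f s = 0 := by
    exact mul_self_eq_zero.mp this
  simpa [hf, sub_eq_zero] using this
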